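/- Let X = L¹(Σ,ν), A the generator of a substochastic C₀-semigroup on X. Suppose f ∈ D(A) and write g = (I - A)f with positive and negative parts g⁺, g⁻; set f₁^± = (I - A)⁻¹ g^±. Then f = f₁⁺ - f₁⁻, f₁^± ∈ D(A)₊, and ‖A f₁^±‖ ≤ 2‖g^±‖; moreover ‖g⁺‖ + ‖g⁻‖ ≤ ‖f‖ + ‖A f‖. -/

import Mathlib

open MeasureTheory Filter Topology
open scoped ENNReal NNReal

-- auxiliary: L¹ norm splits over positive/negative parts
theorem aux_norm_posPart_add_negPart {α : Type*} [MeasurableSpace α] (ν : Measure α)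
    (g : Lp ℝ 1 ν) : ‖g ⊔ 0‖ + ‖(-g) ⊔ 0‖ = ‖g‖ := by
  have h1 : (⇑(g ⊔ 0) : α → ℝ) =ᵐ[ν] ⇑g ⊔ ⇑(0 : Lp ℝ 1 ν) := Lp.coeFn_sup _ _
  have h2 : (⇑((-g) ⊔ 0) : α → ℝ) =ᵐ[ν] ⇑(-g) ⊔ ⇑(0 : Lp ℝ 1 ν) := Lp.coeFn_sup _ _
  have hneg : (⇑(-g) : α → ℝ) =ᵐ[ν] -⇑g := Lp.coeFn_neg g
  have h0 : (⇑(0 : Lp ℝ 1 ν) : α → ℝ) =ᵐ[ν] 0 := Lp.coeFn_zero ℝ 1 ν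
  have key : (fun x => (‖(g ⊔ 0 : Lp ℝ 1 ν) x‖₊ : ℝ≥0∞) + ‖((-g) ⊔ 0 : Lp ℝ 1 ν) x‖₊)
      =ᵐ[ν] fun x => (‖g x‖₊ : ℝ≥0∞) := by
    filter_upwards [h1, h2, hneg, h0] with x e1 e2 e3 e4
    simp only [Pi.sup_apply] at e1 e2
    rw [e1, e2, e3, e4]
    simp only [Pi.neg_apply, Pi.zero_apply]
    have : |max (g x) 0| + |max (-(g x)) 0| = |g x| := by
      rcases le_total (g x) 0 with h | h
      · rw [max_eq_right h, max_eq_left (by linarith)]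
        simp [abs_of_nonpos h, abs_of_nonneg (by linarith : (0:ℝ) ≤ -g x)]
      · rw [max_eq_left h, max_eq_right (by linarith)]
        simp [abs_of_nonneg h]
    rw [← ENNReal.coe_add]
    congr 1
    ext
    simpa [Real.norm_eq_abs] using this
  have lint : (∫⁻ x, ‖(g ⊔ 0 : Lp ℝ 1 ν) x‖₊ ∂ν) + ∫⁻ x, ‖((-g) ⊔ 0 : Lp ℝ 1 ν) x‖₊ ∂ν
      = ∫⁻ x, ‖g x‖₊ ∂ν := by
    rw [← lintegral_add_left' (f := fun x => (‖(g ⊔ 0 : Lp ℝ 1 ν) x‖₊ : ℝ≥0∞)) (by simpa only [enorm_eq_nnnorm] using (Lp.aestronglyMeasurable (g ⊔ 0)).enorm)]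
    exact lintegral_congr_ae key
  simp only [← enorm_eq_nnnorm] at lint
  rw [Lp.norm_def, Lp.norm_def, Lp.norm_def, eLpNorm_one_eq_lintegral_enorm,
    eLpNorm_one_eq_lintegral_enorm, eLpNorm_one_eq_lintegral_enorm,
    ← ENNReal.toReal_add, lint]
  · rw [← eLpNorm_one_eq_lintegral_enorm]; exact Lp.eLpNorm_ne_top (g ⊔ 0)
  · rw [← eLpNorm_one_eq_lintegral_enorm]; exact Lp.eLpNorm_ne_top ((-g) ⊔ 0)


/-- Let `X = L¹(Σ, ν)` and `A` (with domain `DA`) the generator of a substochastic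
C₀-semigroup on `X`, so that `R = (I - A)⁻¹` is a positive contraction. For `f ∈ D(A)` write
`g = (I - A)f` with positive/negative parts `g⁺ = g ⊔ 0`, `g⁻ = (-g) ⊔ 0`, and set
`f₁^± = (I - A)⁻¹ g^±`. Then `f = f₁⁺ - f₁⁻`, `f₁^± ∈ D(A)₊`, `‖A f₁^±‖ ≤ 2‖g^±‖`, and
`‖g⁺‖ + ‖g⁻‖ ≤ ‖f‖ + ‖A f‖`. -/
theorem substochastic_resolvent_decomposition
    {α : Type*} [MeasurableSpace α] (ν : Measure α)
    (V : ℝ → Lp ℝ 1 ν →L[ℝ] Lp ℝ 1 ν)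
    (hV0 : V 0 = 1)
    (hVsemi : ∀ s t : ℝ, 0 ≤ s → 0 ≤ t → V (s + t) = (V s).comp (V t))
    (hVcont : ∀ f : Lp ℝ 1 ν, ContinuousOn (fun t => V t f) (Set.Ici 0))
    (hVpos : ∀ t : ℝ, 0 ≤ t → ∀ g : Lp ℝ 1 ν, 0 ≤ g → 0 ≤ V t g)
    (hVcontr : ∀ t : ℝ, 0 ≤ t → ∀ g : Lp ℝ 1 ν, ‖V t g‖ ≤ ‖g‖)
    (DA : Set (Lp ℝ 1 ν)) (A : Lp ℝ 1 ν → Lp ℝ 1 ν)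
    (hgen : ∀ f ∈ DA, Tendsto (fun h : ℝ => h⁻¹ • (V h f - f)) (𝓝[>] (0:ℝ)) (𝓝 (A f)))
    (R : Lp ℝ 1 ν → Lp ℝ 1 ν)
    -- `R = (I - A)⁻¹`:
    (hRmem : ∀ h, R h ∈ DA)
    (hRright : ∀ h, R h - A (R h) = h)
    (hRleft : ∀ f ∈ DA, R (f - A f) = f)
    (hRpos : ∀ h : Lp ℝ 1 ν, 0 ≤ h → 0 ≤ R h)
    (hRcontr : ∀ h : Lp ℝ 1 ν, ‖R h‖ ≤ ‖h‖)
    (f : Lp ℝ 1 ν) (hf : f ∈ DA)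
    (g : Lp ℝ 1 ν) (hg : g = f - A f) :
    f = R (g ⊔ 0) - R ((-g) ⊔ 0)
    ∧ R (g ⊔ 0) ∈ DA ∧ R ((-g) ⊔ 0) ∈ DA
    ∧ 0 ≤ R (g ⊔ 0) ∧ 0 ≤ R ((-g) ⊔ 0)
    ∧ ‖A (R (g ⊔ 0))‖ ≤ 2 * ‖g ⊔ 0‖
    ∧ ‖A (R ((-g) ⊔ 0))‖ ≤ 2 * ‖(-g) ⊔ 0‖
    ∧ ‖g ⊔ 0‖ + ‖(-g) ⊔ 0‖ ≤ ‖f‖ + ‖A f‖ := by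
  set u := R (g ⊔ 0) with hu
  set v := R ((-g) ⊔ 0) with hv
  -- basic identities
  have hAf : A f = f - g := by rw [hg]; abel
  have hAu : A u = u - (g ⊔ 0) := by
    have := hRright (g ⊔ 0); rw [← hu] at this
    have : A u = u - (u - A u) := by abel
    rw [this, hRright (g ⊔ 0)]
  have hAv : A v = v - ((-g) ⊔ 0) := by
    have : A v = v - (v - A v) := by abel
    rw [this, hRright ((-g) ⊔ 0)]
  have hparts : (g ⊔ 0) - ((-g) ⊔ 0) = g := posPart_sub_negPart g
  -- the key cancellation: w := f - u + v satisfies A' w = w, hence w = 0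
  set w := f - u + v with hw
  have hlim : Tendsto (fun h : ℝ => h⁻¹ • (V h w - w)) (𝓝[>] (0:ℝ)) (𝓝 w) := by
    have T := ((hgen f hf).sub (hgen u (hRmem _))).add (hgen v (hRmem _))
    have heq : (fun h : ℝ => (h⁻¹ • (V h f - f) - h⁻¹ • (V h u - u)) + h⁻¹ • (V h v - v))
        = fun h : ℝ => h⁻¹ • (V h w - w) := by
      funext h
      simp only [hw, map_sub, map_add, smul_sub, smul_add]
      abel
    rw [heq] at T
    have hval : A f - A u + A v = w := by
      rw [hAf, hAu, hAv, hw]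
      have : f - g - (u - (g ⊔ 0)) + (v - ((-g) ⊔ 0))
          = f - u + v - (g - ((g ⊔ 0) - ((-g) ⊔ 0))) := by abel
      rw [this, hparts]; abel
    rwa [hval] at T
  have hw0 : w = 0 := by
    rw [← norm_le_zero_iff]
    refine le_of_forall_pos_le_add fun ε hε => ?_
    have := (hlim.eventually (Metric.ball_mem_nhds w hε)).and self_mem_nhdsWithin
    obtain ⟨h, hball, hhpos⟩ := this.exists
    have hhpos : (0:ℝ) < h := hhpos
    have hdist : ‖h⁻¹ • (V h w - w) - w‖ < ε := by
      simpa [dist_eq_norm] using hball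
    have hkey : ‖V h w - w - h • w‖ ≤ h * ε := by
      have : V h w - w - h • w = h • (h⁻¹ • (V h w - w) - w) := by
        rw [smul_sub, smul_smul, mul_inv_cancel₀ hhpos.ne', one_smul]
      rw [this, norm_smul, Real.norm_eq_abs, abs_of_pos hhpos]
      exact mul_le_mul_of_nonneg_left hdist.le hhpos.le
    have h1 : ‖w + h • w‖ ≤ ‖V h w‖ + h * ε := by
      have : w + h • w = V h w - (V h w - w - h • w) := by abel
      rw [this]
      exact (norm_sub_le _ _).trans (by linarith [hkey])
    have h2 : ‖w + h • w‖ = (1 + h) * ‖w‖ := by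
      have : w + h • w = (1 + h) • w := by rw [add_smul, one_smul]
      rw [this, norm_smul, Real.norm_eq_abs, abs_of_pos (by linarith)]
    have h3 : ‖V h w‖ ≤ ‖w‖ := hVcontr h hhpos.le w
    have : (1 + h) * ‖w‖ ≤ ‖w‖ + h * ε := by rw [← h2]; linarith
    have : h * ‖w‖ ≤ h * ε := by ring_nf at this ⊢; linarith
    have := le_of_mul_le_mul_left (by linarith : h * ‖w‖ ≤ h * ε) hhpos
    linarith
  have hfeq : f = u - v := by
    have : f - (u - v) = w := by rw [hw]; abel
    have h0 : f - (u - v) = 0 := by rw [this, hw0]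
    exact sub_eq_zero.mp h0
  refine ⟨hfeq, hRmem _, hRmem _, hRpos _ le_sup_right, hRpos _ le_sup_right, ?_, ?_, ?_⟩
  · rw [hAu]
    calc ‖u - (g ⊔ 0)‖ ≤ ‖u‖ + ‖g ⊔ 0‖ := norm_sub_le _ _
      _ ≤ ‖g ⊔ 0‖ + ‖g ⊔ 0‖ := by linarith [hRcontr (g ⊔ 0)]
      _ = 2 * ‖g ⊔ 0‖ := by ring
  · rw [hAv]
    calc ‖v - ((-g) ⊔ 0)‖ ≤ ‖v‖ + ‖(-g) ⊔ 0‖ := norm_sub_le _ _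
      _ ≤ ‖(-g) ⊔ 0‖ + ‖(-g) ⊔ 0‖ := by linarith [hRcontr ((-g) ⊔ 0)]
      _ = 2 * ‖(-g) ⊔ 0‖ := by ring
  · rw [aux_norm_posPart_add_negPart ν g, hg]
    exact norm_sub_le _ _
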